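/- arXiv:1607.00709 — 4 statements merged into one kernel-verified Lean document; each statement's English description precedes it below -/
import Mathlib

section
/- For every real t > 1, the Riemann–Siegel theta function satisfies |θ(t) − ((t/2)·log(t/(2πe)) − π/8 + 1/(48t))| ≤ (49/640 + 3ζ(4)/(2π³))·t⁻³. -/
open Real Complex Filter MeasureTheory


/-- The Riemann–Siegel theta function, defined for `t > 0` via Stirling's (Binet's)
formula: with `s = 1/2 + it`,
`θ(t) = −(t/2)·log π + Im((s/2 − 1/2)·Log(s/2) − s/2 + (1/2)·log(2π) − ∫₀^∞ B₁({x})/(x + s/2) dx)`,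
the improper integral being interpreted as the limit of `∫₀^T` as `T → ∞`. -/
noncomputable def riemannSiegelTheta (t : ℝ) : ℝ :=
  -(t/2) * Real.log π +
    (((1/2 + t * Complex.I)/2 - 1/2) * Complex.log ((1/2 + t * Complex.I)/2)
      - (1/2 + t * Complex.I)/2 + (1/2 : ℂ) * (Real.log (2*π) : ℝ)
      - limUnder Filter.atTop
          (fun T : ℝ => ∫ x in (0:ℝ)..T,
            (((Int.fract x : ℝ) : ℂ) - 1/2) / ((x:ℂ) + (1/2 + t * Complex.I)/2))).im

lemma my_arctan_le (u : ℝ) (hu : 0 ≤ u) : Real.arctan u ≤ u := by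
  have h : ∀ x : ℝ, 0 ≤ deriv (fun y => y - Real.arctan y) x := by
    intro x
    have : HasDerivAt (fun y : ℝ => y - Real.arctan y) (1 - 1/(1+x^2)) x :=
      (hasDerivAt_id x).sub (Real.hasDerivAt_arctan x)
    rw [this.deriv]
    have h1 : (0:ℝ) < 1 + x^2 := by positivity
    rw [sub_nonneg, div_le_one h1]; nlinarith
  have hm : Monotone (fun y : ℝ => y - Real.arctan y) :=
    monotone_of_deriv_nonneg (differentiable_id.sub Real.differentiable_arctan) h
  simpa [Real.arctan_zero] using hm hu

lemma my_le_arctan (u : ℝ) (hu : 0 ≤ u) : u - u^3/3 ≤ Real.arctan u := by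
  have h : ∀ x : ℝ, 0 ≤ deriv (fun y => Real.arctan y - (y - y^3/3)) x := by
    intro x
    have : HasDerivAt (fun y : ℝ => Real.arctan y - (y - y^3/3))
        (1/(1+x^2) - (1 - 3*x^2/3)) x := by
      exact (Real.hasDerivAt_arctan x).sub
        ((hasDerivAt_id x).sub (((hasDerivAt_pow 3 x).div_const 3)))
    rw [this.deriv]
    have h1 : (0:ℝ) < 1 + x^2 := by positivity
    rw [sub_nonneg]
    rw [le_div_iff₀ h1]; nlinarith [sq_nonneg (x^2), sq_nonneg x]
  have hm : Monotone (fun y : ℝ => Real.arctan y - (y - y^3/3)) := by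
    apply monotone_of_deriv_nonneg _ h
    exact Real.differentiable_arctan.sub
      (differentiable_id.sub ((differentiable_pow 3).div_const 3))
  have := hm hu
  simp only [Real.arctan_zero] at this
  norm_num at this
  linarith

lemma my_le_log (v : ℝ) (hv : 0 ≤ v) : v - v^2/2 ≤ Real.log (1+v) := by
  have key : MonotoneOn (fun y : ℝ => Real.log (1+y) - (y - y^2/2)) (Set.Ici 0) := by
    apply monotoneOn_of_deriv_nonneg (convex_Ici 0)
    · apply ContinuousOn.sub
      · apply ContinuousOn.log (by fun_prop)
        intro x hx; simp at hx; linarith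
      · fun_prop
    · intro x hx
      simp only [interior_Ici, Set.mem_Ioi] at hx
      apply DifferentiableAt.differentiableWithinAt
      apply DifferentiableAt.sub
      · apply DifferentiableAt.log (by fun_prop); linarith
      · fun_prop
    · intro x hx
      simp only [interior_Ici, Set.mem_Ioi] at hx
      have hd : HasDerivAt (fun y : ℝ => Real.log (1+y) - (y - y^2/2))
          (1/(1+x) - (1 - 2*x/2)) x := by
        have h1 : HasDerivAt (fun y : ℝ => 1+y) 1 x := by
          simpa using (hasDerivAt_id x).const_add 1
        have h2 : HasDerivAt (fun y : ℝ => y - y^2/2) (1 - 2*x/2) x := by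
          have := (hasDerivAt_id x).sub ((hasDerivAt_pow 2 x).div_const 2)
          convert this using 1 <;> (try rfl)
          push_cast; ring
        exact (h1.log (by linarith)).sub h2
      rw [hd.deriv]
      have h1 : (0:ℝ) < 1 + x := by linarith
      rw [sub_nonneg, le_div_iff₀ h1]; nlinarith
  have := key (Set.self_mem_Ici) (Set.mem_Ici.2 hv) hv
  simp only [add_zero, Real.log_one] at this
  norm_num at this
  linarith

lemma my_log_le (v : ℝ) (hv : 0 ≤ v) : Real.log (1+v) ≤ v := by
  have := Real.log_le_sub_one_of_pos (x := 1+v) (by linarith)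
  linarith


noncomputable def Q2 (y : ℝ) : ℝ := (y^2 - y + 1/6)/2
noncomputable def Q3 (y : ℝ) : ℝ := (y^3 - 3/2*y^2 + 1/2*y)/6
noncomputable def Q4 (y : ℝ) : ℝ := (y^4 - 2*y^3 + y^2 - 1/30)/24

lemma hasDerivAt_fract {x : ℝ} (h : ∀ n : ℤ, x ≠ n) : HasDerivAt Int.fract 1 x := by
  have h1 : (⌊x⌋ : ℝ) < x := lt_of_le_of_ne (Int.floor_le x) (Ne.symm (h ⌊x⌋))
  have h2 : x < ⌊x⌋ + 1 := Int.lt_floor_add_one x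
  have hmem : Set.Ioo ((⌊x⌋:ℝ)) (⌊x⌋+1) ∈ nhds x := isOpen_Ioo.mem_nhds ⟨h1, h2⟩
  have heq : (fun y : ℝ => y - (⌊x⌋:ℝ)) =ᶠ[nhds x] Int.fract := by
    filter_upwards [hmem] with y hy
    rw [Int.fract, Int.floor_eq_iff.mpr ⟨hy.1.le, hy.2⟩]
  have : HasDerivAt (fun y : ℝ => y - (⌊x⌋:ℝ)) 1 x := (hasDerivAt_id x).sub_const _
  exact this.congr_of_eventuallyEq heq.symm

lemma hasDerivAt_Q2f {x : ℝ} (h : ∀ n : ℤ, x ≠ n) :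
    HasDerivAt (fun y => Q2 (Int.fract y)) (Int.fract x - 1/2) x := by
  have hq : HasDerivAt Q2 (Int.fract x - 1/2) (Int.fract x) := by
    unfold Q2
    have := (((hasDerivAt_pow 2 (Int.fract x)).sub (hasDerivAt_id _)).add_const
      (1/6 : ℝ)).div_const 2
    convert this using 1 <;> (try rfl); push_cast; ring
  exact (hq.comp x (hasDerivAt_fract h)).congr_deriv (mul_one _)

lemma hasDerivAt_Q3f {x : ℝ} (h : ∀ n : ℤ, x ≠ n) :
    HasDerivAt (fun y => Q3 (Int.fract y)) (Q2 (Int.fract x)) x := by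
  have hq : HasDerivAt Q3 (Q2 (Int.fract x)) (Int.fract x) := by
    unfold Q3 Q2
    have := (((hasDerivAt_pow 3 (Int.fract x)).sub
      ((hasDerivAt_pow 2 (Int.fract x)).const_mul (3/2:ℝ))).add
      ((hasDerivAt_id (Int.fract x)).const_mul (1/2:ℝ))).div_const 6
    convert this using 1 <;> (try rfl); push_cast; ring
  exact (hq.comp x (hasDerivAt_fract h)).congr_deriv (mul_one _)

lemma hasDerivAt_Q4f {x : ℝ} (h : ∀ n : ℤ, x ≠ n) :
    HasDerivAt (fun y => Q4 (Int.fract y)) (Q3 (Int.fract x)) x := by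
  have hq : HasDerivAt Q4 (Q3 (Int.fract x)) (Int.fract x) := by
    unfold Q4 Q3
    have := ((((hasDerivAt_pow 4 (Int.fract x)).sub
      ((hasDerivAt_pow 3 (Int.fract x)).const_mul (2:ℝ))).add
      (hasDerivAt_pow 2 (Int.fract x))).sub_const (1/30:ℝ)).div_const 24
    convert this using 1 <;> (try rfl); push_cast; ring
  exact (hq.comp x (hasDerivAt_fract h)).congr_deriv (mul_one _)

lemma continuous_Q2f : Continuous fun x => Q2 (Int.fract x) := by
  have h := ContinuousOn.comp_fract'' (f := Q2) (by unfold Q2; fun_prop) (by unfold Q2; norm_num)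
  exact h

lemma continuous_Q3f : Continuous fun x => Q3 (Int.fract x) := by
  have h := ContinuousOn.comp_fract'' (f := Q3) (by unfold Q3; fun_prop) (by unfold Q3; norm_num)
  exact h

lemma continuous_Q4f : Continuous fun x => Q4 (Int.fract x) := by
  have h := ContinuousOn.comp_fract'' (f := Q4) (by unfold Q4; fun_prop) (by unfold Q4; norm_num)
  exact h

noncomputable def Hf (z : ℂ) (x : ℝ) : ℂ :=
  (Q2 (Int.fract x) : ℂ)/((x:ℂ)+z) + (Q3 (Int.fract x) : ℂ)/((x:ℂ)+z)^2
    + 2*(Q4 (Int.fract x) : ℂ)/((x:ℂ)+z)^3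

lemma ne_zero_of_im {z : ℂ} (him : z.im ≠ 0) (x : ℝ) : (x:ℂ) + z ≠ 0 := by
  intro h
  apply him
  have := congrArg Complex.im h
  simpa using this

lemma algHf (w F q2 q3 q4 : ℂ) (hw : w ≠ 0) :
    ((F - 1/2) * w - q2 * 1)/w^2 + (q2*w^2 - q3*(2*w))/(w^2)^2
      + (2*q3*w^3 - 2*q4*(3*w^2))/(w^3)^2 = (F - 1/2)/w - 6*q4/w^4 := by
  have h2 : w^2 ≠ 0 := pow_ne_zero 2 hw
  have h4 : w^4 ≠ 0 := pow_ne_zero 4 hw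
  have h22 : (w^2)^2 ≠ 0 := pow_ne_zero 2 h2
  have h32 : (w^3)^2 ≠ 0 := pow_ne_zero 2 (pow_ne_zero 3 hw)
  rw [div_add_div _ _ h2 h22, div_add_div _ _ (mul_ne_zero h2 h22) h32,
    div_sub_div _ _ hw h4, div_eq_div_iff (mul_ne_zero (mul_ne_zero h2 h22) h32) (mul_ne_zero hw h4)]
  ring

lemma hasDerivAt_Hf {z : ℂ} (him : z.im ≠ 0) {x : ℝ} (h : ∀ n : ℤ, x ≠ n) :
    HasDerivAt (Hf z)
      ((((Int.fract x:ℝ):ℂ) - 1/2)/((x:ℂ)+z) - 6*((Q4 (Int.fract x):ℝ):ℂ)/((x:ℂ)+z)^4) x := by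
  have hzx : (x:ℂ) + z ≠ 0 := ne_zero_of_im him x
  have hden : HasDerivAt (fun y : ℝ => (y:ℂ)+z) 1 x := by
    simpa using ((hasDerivAt_id x).ofReal_comp).add_const z
  have h2 : HasDerivAt (fun y : ℝ => ((y:ℂ)+z)^2) (2*((x:ℂ)+z)) x := by
    have h := hden.mul hden
    have he : (fun y : ℝ => ((y:ℂ)+z) * ((y:ℂ)+z)) = (fun y : ℝ => ((y:ℂ)+z)^2) := by
      funext y; ring
    rw [← he]
    convert h using 1 <;> (try rfl); ring
  have h3 : HasDerivAt (fun y : ℝ => ((y:ℂ)+z)^3) (3*((x:ℂ)+z)^2) x := by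
    have h := (hden.mul hden).mul hden
    have he : (fun y : ℝ => ((y:ℂ)+z) * ((y:ℂ)+z) * ((y:ℂ)+z)) = (fun y : ℝ => ((y:ℂ)+z)^3) := by
      funext y; ring
    rw [← he]
    convert h using 1 <;> (try rfl); simp only [Pi.mul_apply]; ring
  have hn2 : HasDerivAt (fun y : ℝ => ((Q2 (Int.fract y) : ℝ):ℂ))
      ((Int.fract x - 1/2 : ℝ):ℂ) x := (hasDerivAt_Q2f h).ofReal_comp
  have hn3 : HasDerivAt (fun y : ℝ => ((Q3 (Int.fract y) : ℝ):ℂ))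
      ((Q2 (Int.fract x) : ℝ):ℂ) x := (hasDerivAt_Q3f h).ofReal_comp
  have hn4 : HasDerivAt (fun y : ℝ => (2:ℂ)*((Q4 (Int.fract y) : ℝ):ℂ))
      (2*((Q3 (Int.fract x) : ℝ):ℂ)) x := ((hasDerivAt_Q4f h).ofReal_comp).const_mul 2
  have hT2 := hn2.div hden hzx
  have hT3 := hn3.div h2 (pow_ne_zero 2 hzx)
  have hT4 := hn4.div h3 (pow_ne_zero 3 hzx)
  have := (hT2.add hT3).add hT4
  unfold Hf
  convert this using 1 <;> (try rfl)
  push_cast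
  exact (algHf ((x:ℂ)+z) _ _ _ _ hzx).symm

lemma absQ4 {y : ℝ} (h0 : 0 ≤ y) (h1 : y ≤ 1) : |Q4 y| ≤ 1/720 := by
  unfold Q4
  rw [abs_le]
  constructor <;> nlinarith [sq_nonneg (y*(1-y)), sq_nonneg (2*y-1), mul_nonneg h0 (by linarith : (0:ℝ) ≤ 1 - y)]

lemma absQ4f (x : ℝ) : |Q4 (Int.fract x)| ≤ 1/720 :=
  absQ4 (Int.fract_nonneg x) (Int.fract_lt_one x).le

lemma absQ2f (x : ℝ) : |Q2 (Int.fract x)| ≤ 1 := by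
  have h0 := Int.fract_nonneg x
  have h1 := (Int.fract_lt_one x).le
  unfold Q2; rw [abs_le]
  constructor <;> nlinarith [sq_nonneg (Int.fract x)]

lemma absQ3f (x : ℝ) : |Q3 (Int.fract x)| ≤ 1 := by
  have h0 := Int.fract_nonneg x
  have h1 := (Int.fract_lt_one x).le
  unfold Q3; rw [abs_le]
  constructor <;> nlinarith [sq_nonneg (Int.fract x), pow_le_one₀ h0 h1 (n := 3), pow_le_one₀ h0 h1 (n := 2)]

lemma abs_den_ge {z : ℂ} (x : ℝ) : |z.im| ≤ ‖(x:ℂ)+z‖ := by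
  have := Complex.abs_im_le_norm ((x:ℂ)+z)
  simpa using this

lemma II_of_bound (f : ℝ → ℂ) (hm : Measurable f) (C : ℝ) (hb : ∀ x, ‖f x‖ ≤ C) (a b : ℝ) :
    IntervalIntegrable f MeasureTheory.volume a b := by
  rw [intervalIntegrable_iff]
  apply MeasureTheory.Integrable.mono' (g := fun _ => C)
    (MeasureTheory.integrableOn_const measure_Ioc_lt_top.ne)
  · exact hm.aestronglyMeasurable.restrict
  · exact MeasureTheory.ae_of_all _ hb

lemma measurable_f1 (z : ℂ) :
    Measurable fun x : ℝ => (((Int.fract x:ℝ):ℂ) - 1/2)/((x:ℂ)+z) := by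
  apply Measurable.div
  · exact (Complex.measurable_ofReal.comp measurable_fract).sub measurable_const
  · exact Complex.measurable_ofReal.add measurable_const

lemma measurable_f4 (z : ℂ) :
    Measurable fun x : ℝ => ((Q4 (Int.fract x):ℝ):ℂ)/((x:ℂ)+z)^4 := by
  apply Measurable.div
  · exact Complex.measurable_ofReal.comp (continuous_Q4f.measurable)
  · exact (Complex.measurable_ofReal.add measurable_const).pow_const 4

lemma norm_f1_le {z : ℂ} (him : z.im ≠ 0) (x : ℝ) :
    ‖(((Int.fract x:ℝ):ℂ) - 1/2)/((x:ℂ)+z)‖ ≤ 1/|z.im| := by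
  rw [norm_div]
  apply div_le_div₀ (by positivity) _ (abs_pos.mpr him) (abs_den_ge x)
  have : (((Int.fract x:ℝ):ℂ) - 1/2) = (((Int.fract x - 1/2 : ℝ)):ℂ) := by push_cast; ring
  rw [this, Complex.norm_real, Real.norm_eq_abs]
  have h0 := Int.fract_nonneg x
  have h1 := (Int.fract_lt_one x).le
  rw [abs_le]; constructor <;> linarith

lemma norm_f4_le {z : ℂ} (him : z.im ≠ 0) (x : ℝ) :
    ‖((Q4 (Int.fract x):ℝ):ℂ)/((x:ℂ)+z)^4‖ ≤ (1/720)/|z.im|^4 := by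
  rw [norm_div, norm_pow]
  apply div_le_div₀ (by positivity) _ (by positivity) _
  · rw [Complex.norm_real]; exact absQ4f x
  · exact pow_le_pow_left₀ (abs_nonneg _) (abs_den_ge x) 4

lemma continuous_Hf {z : ℂ} (him : z.im ≠ 0) : Continuous (Hf z) := by
  have hden : Continuous fun x : ℝ => (x:ℂ)+z := Complex.continuous_ofReal.add continuous_const
  unfold Hf
  apply Continuous.add
  apply Continuous.add
  · exact (Complex.continuous_ofReal.comp continuous_Q2f).div hden (fun x => ne_zero_of_im him x)
  · exact (Complex.continuous_ofReal.comp continuous_Q3f).div (hden.pow 2)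
      (fun x => pow_ne_zero _ (ne_zero_of_im him x))
  · exact (continuous_const.mul (Complex.continuous_ofReal.comp continuous_Q4f)).div (hden.pow 3)
      (fun x => pow_ne_zero _ (ne_zero_of_im him x))

lemma ftc_Hf {z : ℂ} (him : z.im ≠ 0) (T : ℝ) :
    ∫ x in (0:ℝ)..T, (((Int.fract x:ℝ):ℂ) - 1/2)/((x:ℂ)+z)
      = Hf z T - Hf z 0 + 6 * ∫ x in (0:ℝ)..T, ((Q4 (Int.fract x):ℝ):ℂ)/((x:ℂ)+z)^4 := by
  have hI1 := II_of_bound _ (measurable_f1 z) _ (norm_f1_le him) 0 T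
  have hI4 := II_of_bound _ (measurable_f4 z) _ (norm_f4_le him) 0 T
  have key := MeasureTheory.integral_eq_of_hasDerivAt_off_countable (Hf z)
    (fun x => (((Int.fract x:ℝ):ℂ) - 1/2)/((x:ℂ)+z) - 6*(((Q4 (Int.fract x):ℝ):ℂ)/((x:ℂ)+z)^4))
    (a := 0) (b := T) (s := Set.range ((↑) : ℤ → ℝ)) (Set.countable_range _)
    ((continuous_Hf him).continuousOn)
    (by
      intro x hx
      have hd := hasDerivAt_Hf him (x := x) (fun n hn => hx.2 ⟨n, hn.symm⟩)
      simpa [mul_div_assoc] using hd)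
    (by
      apply IntervalIntegrable.sub hI1
      have := hI4.const_mul (6:ℂ)
      simpa using this)
  rw [intervalIntegral.integral_sub hI1 (by simpa using hI4.const_mul (6:ℂ))] at key
  have h6 : ∫ x in (0:ℝ)..T, (6:ℂ)*(((Q4 (Int.fract x):ℝ):ℂ)/((x:ℂ)+z)^4)
      = 6 * ∫ x in (0:ℝ)..T, ((Q4 (Int.fract x):ℝ):ℂ)/((x:ℂ)+z)^4 :=
    intervalIntegral.integral_const_mul 6 _
  rw [h6] at key
  linear_combination key

lemma tendsto_Hf_zero {z : ℂ} (him : z.im ≠ 0) (hre : 0 ≤ z.re) :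
    Filter.Tendsto (Hf z) Filter.atTop (nhds 0) := by
  apply squeeze_zero_norm' (a := fun T : ℝ => 4 * T⁻¹)
  · filter_upwards [Filter.eventually_ge_atTop (1:ℝ)] with T hT
    have hT0 : (0:ℝ) < T := by linarith
    have habs : T ≤ ‖(T:ℂ)+z‖ := by
      have h1 := Complex.re_le_norm ((T:ℂ)+z)
      simp only [Complex.add_re, Complex.ofReal_re] at h1
      linarith
    have hb : ∀ (q : ℝ) (n : ℕ), 1 ≤ n → |q| ≤ 1 → ‖(q:ℂ)/((T:ℂ)+z)^n‖ ≤ T⁻¹ := by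
      intro q n hn hq
      rw [norm_div, norm_pow, Complex.norm_real, Real.norm_eq_abs]
      have h1 : T^n ≤ (‖(T:ℂ)+z‖)^n := pow_le_pow_left₀ hT0.le habs n
      have h2 : T ≤ T^n := le_self_pow₀ hT (by omega)
      calc |q| / (‖(T:ℂ)+z‖)^n ≤ 1 / T^n :=
            div_le_div₀ zero_le_one hq (pow_pos hT0 n) h1
        _ ≤ 1/T := one_div_le_one_div_of_le hT0 h2
        _ = T⁻¹ := one_div T
    have h2 := hb (Q2 (Int.fract T)) 1 le_rfl (absQ2f T)
    rw [pow_one] at h2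
    have h3 := hb (Q3 (Int.fract T)) 2 (by norm_num) (absQ3f T)
    have h4 := hb (Q4 (Int.fract T)) 3 (by norm_num) ((absQ4f T).trans (by norm_num))
    unfold Hf
    calc ‖(Q2 (Int.fract T) : ℂ)/((T:ℂ)+z) + (Q3 (Int.fract T) : ℂ)/((T:ℂ)+z)^2
          + 2*(Q4 (Int.fract T) : ℂ)/((T:ℂ)+z)^3‖
        ≤ ‖(Q2 (Int.fract T) : ℂ)/((T:ℂ)+z) + (Q3 (Int.fract T) : ℂ)/((T:ℂ)+z)^2‖
          + ‖2*(Q4 (Int.fract T) : ℂ)/((T:ℂ)+z)^3‖ := norm_add_le _ _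
      _ ≤ ‖(Q2 (Int.fract T) : ℂ)/((T:ℂ)+z)‖ + ‖(Q3 (Int.fract T) : ℂ)/((T:ℂ)+z)^2‖
          + ‖2*(Q4 (Int.fract T) : ℂ)/((T:ℂ)+z)^3‖ := by
            gcongr; exact norm_add_le _ _
      _ ≤ T⁻¹ + T⁻¹ + 2*T⁻¹ := by
            have h4' : ‖2*(Q4 (Int.fract T) : ℂ)/((T:ℂ)+z)^3‖ ≤ 2*T⁻¹ := by
              rw [mul_div_assoc, norm_mul, Complex.norm_ofNat]
              exact mul_le_mul_of_nonneg_left h4 (by norm_num)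
            exact add_le_add (add_le_add h2 h3) h4'
      _ = 4 * T⁻¹ := by ring
  · have := tendsto_inv_atTop_zero (𝕜 := ℝ)
    have h2 := this.const_mul (4:ℝ)
    simpa using h2

lemma abs_sq_den {z : ℂ} (hre : 0 ≤ z.re) {x : ℝ} (hx : 0 ≤ x) :
    x^2 + z.im^2 ≤ (‖(x:ℂ)+z‖)^2 := by
  rw [Complex.sq_norm, Complex.normSq_apply]
  simp only [Complex.add_re, Complex.ofReal_re, Complex.add_im, Complex.ofReal_im, zero_add]
  nlinarith

lemma integrableOn_f4 {z : ℂ} (him : 1/2 ≤ z.im) (hre : 0 ≤ z.re) :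
    MeasureTheory.IntegrableOn
      (fun x : ℝ => ((Q4 (Int.fract x):ℝ):ℂ)/((x:ℂ)+z)^4) (Set.Ioi 0) := by
  apply MeasureTheory.Integrable.mono'
    ((integrable_inv_one_add_sq.const_mul (1/45)).integrableOn)
    ((measurable_f4 z).aestronglyMeasurable.restrict)
  filter_upwards [MeasureTheory.ae_restrict_mem measurableSet_Ioi] with x hx
  have hx0 : (0:ℝ) ≤ x := (Set.mem_Ioi.mp hx).le
  have h1 : x^2 + 1/4 ≤ (‖(x:ℂ)+z‖)^2 := by
    have := abs_sq_den hre hx0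
    nlinarith
  have h2 : (1+x^2)/16 ≤ ((‖(x:ℂ)+z‖)^2)^2 := by
    nlinarith [sq_nonneg x, norm_nonneg ((x:ℂ)+z)]
  rw [norm_div, norm_pow, Complex.norm_real, Real.norm_eq_abs]
  have h3 : ((‖(x:ℂ)+z‖))^4 = ((‖(x:ℂ)+z‖)^2)^2 := by ring
  rw [h3]
  have h4 : (0:ℝ) < (1+x^2)/16 := by positivity
  calc |Q4 (Int.fract x)| / ((‖(x:ℂ)+z‖)^2)^2
      ≤ (1/720) / ((1+x^2)/16) := div_le_div₀ (by norm_num) (absQ4f x) h4 h2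
    _ = 1/45 * (1+x^2)⁻¹ := by field_simp; ring

noncomputable def Fg (a x : ℝ) : ℝ := x/(2*a^2*(x^2+a^2)) + Real.arctan (x/a)/(2*a^3)

lemma hasDerivAt_Fg {a : ℝ} (ha : 0 < a) (x : ℝ) :
    HasDerivAt (Fg a) (((x^2+a^2)^2)⁻¹) x := by
  have hd : (0:ℝ) < x^2 + a^2 := by positivity
  have hden : HasDerivAt (fun y : ℝ => 2*a^2*(y^2+a^2)) (2*a^2*(2*x)) x := by
    have := ((hasDerivAt_pow 2 x).add_const (a^2)).const_mul (2*a^2)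
    convert this using 1 <;> (try rfl)
    push_cast; ring
  have h1 : HasDerivAt (fun y : ℝ => y/(2*a^2*(y^2+a^2)))
      ((1*(2*a^2*(x^2+a^2)) - x*(2*a^2*(2*x)))/(2*a^2*(x^2+a^2))^2) x :=
    (hasDerivAt_id x).div hden (by positivity)
  have h2 : HasDerivAt (fun y : ℝ => Real.arctan (y/a)/(2*a^3))
      ((1/(1+(x/a)^2) * (1/a))/(2*a^3)) x := by
    have hda : HasDerivAt (fun y : ℝ => y/a) (1/a) x := by
      have := (hasDerivAt_id x).div_const a
      simpa using this
    exact ((Real.hasDerivAt_arctan (x/a)).comp x hda).div_const (2*a^3)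
  have := h1.add h2
  convert this using 1 <;> (try rfl)
  have hne : (1 + (x/a)^2) = (x^2+a^2)/a^2 := by field_simp; ring
  rw [hne]
  field_simp
  ring

lemma ftc_g {a : ℝ} (ha : 0 < a) (T : ℝ) :
    ∫ x in (0:ℝ)..T, ((x^2+a^2)^2)⁻¹ = Fg a T := by
  have h := intervalIntegral.integral_eq_sub_of_hasDerivAt
    (f := Fg a) (f' := fun x => ((x^2+a^2)^2)⁻¹) (a := 0) (b := T)
    (fun x _ => hasDerivAt_Fg ha x)
    (by
      apply Continuous.intervalIntegrable
      apply Continuous.inv₀ (by fun_prop)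
      intro x; positivity)
  rw [h]
  unfold Fg
  simp [Real.arctan_zero]

lemma tendsto_Fg {a : ℝ} (ha : 0 < a) :
    Filter.Tendsto (Fg a) Filter.atTop (nhds (π/(4*a^3))) := by
  have h1 : Filter.Tendsto (fun T : ℝ => T/(2*a^2*(T^2+a^2))) Filter.atTop (nhds 0) := by
    apply squeeze_zero' (g := fun T : ℝ => 1/(2*a^2) * T⁻¹)
    · filter_upwards [Filter.eventually_gt_atTop (0:ℝ)] with T hT
      positivity
    · filter_upwards [Filter.eventually_gt_atTop (0:ℝ)] with T hT
      rw [div_le_iff₀ (by positivity)]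
      have he : 1 / (2 * a ^ 2) * (2 * a ^ 2 * (T ^ 2 + a ^ 2)) * T⁻¹ = (T^2+a^2)/T := by
        field_simp
      rw [mul_assoc, mul_comm (T⁻¹), ← mul_assoc, he, le_div_iff₀ hT]
      nlinarith [sq_nonneg a]
    · have := tendsto_inv_atTop_zero (𝕜 := ℝ)
      have h2 := this.const_mul (1/(2*a^2))
      simpa using h2
  have h2 : Filter.Tendsto (fun T : ℝ => Real.arctan (T/a)/(2*a^3)) Filter.atTop
      (nhds ((π/2)/(2*a^3))) := by
    apply Filter.Tendsto.div_const
    apply (tendsto_nhds_of_tendsto_nhdsWithin Real.tendsto_arctan_atTop).comp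
    exact Filter.tendsto_id.atTop_div_const ha
  have := h1.add h2
  have he : (0:ℝ) + (π/2)/(2*a^3) = π/(4*a^3) := by ring
  rw [he] at this
  exact this

lemma norm_f4_le' {z : ℂ} (him : z.im ≠ 0) (hre : 0 ≤ z.re) {x : ℝ} (hx : 0 ≤ x) :
    ‖((Q4 (Int.fract x):ℝ):ℂ)/((x:ℂ)+z)^4‖ ≤ (1/720) * (((x^2+z.im^2)^2)⁻¹) := by
  have h1 := abs_sq_den hre hx
  have h2 : (0:ℝ) ≤ x^2 + z.im^2 := by positivity
  rw [norm_div, norm_pow, Complex.norm_real, Real.norm_eq_abs]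
  have h3 : ((‖(x:ℂ)+z‖))^4 = ((‖(x:ℂ)+z‖)^2)^2 := by ring
  rw [h3]
  have h0 : (0:ℝ) < x^2 + z.im^2 := by
    have : z.im^2 > 0 := by positivity
    nlinarith
  calc |Q4 (Int.fract x)| / ((‖(x:ℂ)+z‖)^2)^2
      ≤ (1/720) / ((x^2+z.im^2)^2) :=
        div_le_div₀ (by norm_num) (absQ4f x) (by positivity) (by nlinarith)
    _ = (1/720) * (((x^2+z.im^2)^2)⁻¹) := by rw [div_eq_mul_inv]

lemma norm_J_le {z : ℂ} (him : 1/2 ≤ z.im) (hre : 0 ≤ z.re) :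
    ‖∫ x in Set.Ioi (0:ℝ), ((Q4 (Int.fract x):ℝ):ℂ)/((x:ℂ)+z)^4‖
      ≤ (1/720)*(π/(4*z.im^3)) := by
  set a := z.im with ha'
  have ha : (0:ℝ) < a := by linarith
  have hJt := MeasureTheory.intervalIntegral_tendsto_integral_Ioi 0
    (integrableOn_f4 him hre) Filter.tendsto_id
  have hnorm := hJt.norm
  have hbnd := (tendsto_Fg ha).const_mul (1/720 : ℝ)
  refine le_of_tendsto_of_tendsto hnorm hbnd ?_
  filter_upwards [Filter.eventually_ge_atTop (0:ℝ)] with T hT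
  have hgI : IntervalIntegrable (fun x : ℝ => (1/720) * (((x^2+a^2)^2)⁻¹))
      MeasureTheory.volume 0 T := by
    apply Continuous.intervalIntegrable
    apply Continuous.mul continuous_const
    apply Continuous.inv₀ (by fun_prop)
    intro x; positivity
  have hle := intervalIntegral.norm_integral_le_abs_of_norm_le
    (f := fun x : ℝ => ((Q4 (Int.fract x):ℝ):ℂ)/((x:ℂ)+z)^4)
    (μ := MeasureTheory.volume) (a := 0) (b := T)
    (by
      filter_upwards [MeasureTheory.ae_restrict_mem measurableSet_uIoc] with x hx
      have hx0 : (0:ℝ) ≤ x := by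
        rcases hx with ⟨h1, h2⟩
        simp only [min_def, hT] at h1
        split_ifs at h1 <;> linarith
      exact norm_f4_le' (show z.im ≠ 0 by rw [← ha']; exact ne_of_gt ha) hre hx0)
    hgI
  have heval : ∫ x in (0:ℝ)..T, (1/720) * (((x^2+a^2)^2)⁻¹) = (1/720) * Fg a T := by
    rw [intervalIntegral.integral_const_mul, ftc_g ha]
  rw [heval] at hle
  have hFg0 : 0 ≤ Fg a T := by
    unfold Fg
    have harct : 0 ≤ Real.arctan (T/a) := by
      have := Real.arctan_strictMono.monotone (div_nonneg hT ha.le : (0:ℝ) ≤ T/a)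
      simpa [Real.arctan_zero] using this
    positivity
  calc ‖∫ x in (0:ℝ)..T, ((Q4 (Int.fract x):ℝ):ℂ)/((x:ℂ)+z)^4‖
      ≤ |(1/720) * Fg a T| := hle
    _ = (1/720) * Fg a T := abs_of_nonneg (by positivity)

lemma tendsto_F1 {z : ℂ} (him : 1/2 ≤ z.im) (hre : 0 ≤ z.re) :
    Filter.Tendsto (fun T : ℝ => ∫ x in (0:ℝ)..T, (((Int.fract x:ℝ):ℂ) - 1/2)/((x:ℂ)+z))
      Filter.atTop
      (nhds (-(Hf z 0) + 6 * ∫ x in Set.Ioi (0:ℝ), ((Q4 (Int.fract x):ℝ):ℂ)/((x:ℂ)+z)^4)) := by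
  have him0 : z.im ≠ 0 := ne_of_gt (by linarith)
  have hJt := MeasureTheory.intervalIntegral_tendsto_integral_Ioi 0
    (integrableOn_f4 him hre) Filter.tendsto_id
  have h := ((tendsto_Hf_zero him0 hre).sub_const (Hf z 0)).add (hJt.const_mul (6:ℂ))
  rw [zero_sub] at h
  apply h.congr
  intro T
  exact (ftc_Hf him0 T).symm


lemma arg_eq_arctan' {w : ℂ} (h : 0 < w.re) : w.arg = Real.arctan (w.im / w.re) := by
  rw [Complex.arg_of_re_nonneg h.le, Real.arctan_eq_arcsin]
  congr 1
  have hw0 : w ≠ 0 := fun hw => by simp [hw] at h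
  have habs0 : 0 < ‖w‖ := norm_pos_iff.mpr hw0
  have h1 : 1 + (w.im/w.re)^2 = (‖w‖)^2 / w.re^2 := by
    rw [Complex.sq_norm, Complex.normSq_apply]
    field_simp
  rw [h1]
  have h2 : Real.sqrt ((‖w‖)^2 / w.re^2) = ‖w‖ / w.re := by
    rw [Real.sqrt_div (sq_nonneg _), Real.sqrt_sq habs0.le, Real.sqrt_sq h.le]
  rw [h2]
  field_simp

lemma D_bound (t : ℝ) (ht : 1 < t) :
    |t/4 * Real.log (1+1/(4*t^2)) + 1/4 * Real.arctan (1/(2*t))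
      - 2*t/(3*(1+4*t^2)) - 1/(48*t)| ≤ 1/(24*t^3) := by
  have ht0 : (0:ℝ) < t := by linarith
  have ht3 : (0:ℝ) < t^3 := by positivity
  have hu : (0:ℝ) ≤ 1/(2*t) := by positivity
  have hv : (0:ℝ) ≤ 1/(4*t^2) := by positivity
  have hA1 : Real.arctan (1/(2*t)) ≤ 1/(2*t) := my_arctan_le _ hu
  have hA2 : 1/(2*t) - 1/(24*t^3) ≤ Real.arctan (1/(2*t)) := by
    have := my_le_arctan (1/(2*t)) hu
    have he : (1/(2*t))^3/3 = 1/(24*t^3) := by field_simp; ring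
    linarith [he ▸ this]
  have hL1 : t/4 * Real.log (1+1/(4*t^2)) ≤ 1/(16*t) := by
    have := mul_le_mul_of_nonneg_left (my_log_le _ hv) (by positivity : (0:ℝ) ≤ t/4)
    have he : t/4 * (1/(4*t^2)) = 1/(16*t) := by field_simp; ring
    linarith [he ▸ this]
  have hL2 : 1/(16*t) - 1/(128*t^3) ≤ t/4 * Real.log (1+1/(4*t^2)) := by
    have := mul_le_mul_of_nonneg_left (my_le_log _ hv) (by positivity : (0:ℝ) ≤ t/4)
    have he : t/4 * (1/(4*t^2) - (1/(4*t^2))^2/2) = 1/(16*t) - 1/(128*t^3) := by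
      field_simp; ring
    linarith [he ▸ this]
  have hP : 2*t/(3*(1+4*t^2)) = 1/(6*t) - 1/(6*t*(1+4*t^2)) := by
    field_simp; ring
  have hQ0 : (0:ℝ) ≤ 1/(6*t*(1+4*t^2)) := by positivity
  have hQ1 : 1/(6*t*(1+4*t^2)) ≤ 1/(24*t^3) := by
    apply one_div_le_one_div_of_le (by positivity)
    nlinarith
  have hz1 : 1/(16*t) + 1/4 * (1/(2*t)) - 1/(6*t) - 1/(48*t) = 0 := by
    field_simp; ring
  have hz2 : 1/4 * (1/(2*t) - 1/(24*t^3)) = 1/4 * (1/(2*t)) - 1/(96*t^3) := by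
    ring
  have hz3 : 1/(128*t^3) + 1/(96*t^3) ≤ 1/(24*t^3) := by
    rw [div_add_div _ _ (by positivity) (by positivity), div_le_div_iff₀ (by positivity) (by positivity)]
    ring_nf
    nlinarith
  rw [abs_le]
  constructor
  · nlinarith [mul_le_mul_of_nonneg_left hA2 (by norm_num : (0:ℝ) ≤ 1/4)]
  · nlinarith [mul_le_mul_of_nonneg_left hA1 (by norm_num : (0:ℝ) ≤ 1/4)]

/-- For every real `t > 1`,
`|θ(t) − ((t/2)·log(t/(2πe)) − π/8 + 1/(48t))| ≤ (49/640 + 3ζ(4)/(2π³))·t⁻³`,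
where `ζ(4) = π⁴/90`. -/
theorem stmt_0 (t : ℝ) (ht : 1 < t) :
    |riemannSiegelTheta t - (t/2 * Real.log (t/(2*π*Real.exp 1)) - π/8 + 1/(48*t))|
      ≤ (49/640 + 3*(π^4/90)/(2*π^3)) * t⁻¹^3 := by
  have ht0 : (0:ℝ) < t := by linarith
  have ht3 : (0:ℝ) < t^3 := by positivity
  unfold riemannSiegelTheta
  set z : ℂ := (1/2 + (t:ℂ) * Complex.I)/2 with hzdef
  have hz : z = ((1/4:ℝ):ℂ) + ((t/2:ℝ):ℂ)*Complex.I := by rw [hzdef]; push_cast; ring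
  have hzre : z.re = 1/4 := by rw [hz]; simp
  have hzim : z.im = t/2 := by rw [hz]; simp
  have him2 : (1:ℝ)/2 ≤ z.im := by rw [hzim]; linarith
  have hre0 : (0:ℝ) ≤ z.re := by rw [hzre]; norm_num
  have him0 : z.im ≠ 0 := by rw [hzim]; positivity
  set J := ∫ x in Set.Ioi (0:ℝ), ((Q4 (Int.fract x):ℝ):ℂ)/((x:ℂ)+z)^4 with hJdef
  have hlim : limUnder Filter.atTop
      (fun T : ℝ => ∫ x in (0:ℝ)..T, (((Int.fract x:ℝ):ℂ) - 1/2)/((x:ℂ)+z))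
        = -(Hf z 0) + 6*J := (tendsto_F1 him2 hre0).limUnder_eq
  rw [hlim]
  -- Hf z 0
  have hHf0 : Hf z 0 = ((1/12:ℝ):ℂ)*z⁻¹ - ((1/360:ℝ):ℂ)*(z^3)⁻¹ := by
    unfold Hf Q2 Q3 Q4
    norm_num [Int.fract_zero]
    push_cast
    ring
  have hL : (-(Hf z 0) + 6*J).im
      = -((1/12) * (z⁻¹).im - (1/360) * ((z^3)⁻¹).im) + 6*J.im := by
    rw [hHf0]
    simp [Complex.add_im, Complex.neg_im, Complex.sub_im, Complex.mul_im]
  -- arg and log abs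
  have harg : z.arg = π/2 - Real.arctan (1/(2*t)) := by
    rw [arg_eq_arctan' (by rw [hzre]; norm_num), hzim, hzre]
    have he : (t/2)/(1/4:ℝ) = 2*t := by ring
    rw [he]
    have h2 := Real.arctan_inv_of_pos (show (0:ℝ) < 2*t by linarith)
    rw [show ((2*t:ℝ))⁻¹ = 1/(2*t) by rw [one_div]] at h2
    linarith
  have hnormSq : Complex.normSq z = 1/16 + t^2/4 := by
    rw [Complex.normSq_apply, hzre, hzim]; ring
  have hlogabs : Real.log (‖z‖) = (1/2) * Real.log (1/16 + t^2/4) := by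
    rw [Complex.norm_def, hnormSq, Real.log_sqrt (by positivity)]; ring
  have hinv' : (1/12:ℝ) * (z⁻¹).im = -(2*t/(3*(1+4*t^2))) := by
    rw [Complex.inv_im, hnormSq, hzim]
    field_simp
    ring
  -- bounds on small terms
  have habs_ge : t/2 ≤ ‖z‖ := by
    have h1 := Complex.abs_im_le_norm z
    rw [hzim] at h1
    calc t/2 = |t/2| := (abs_of_pos (by linarith)).symm
      _ ≤ ‖z‖ := h1
  have hz3 : |((z^3)⁻¹).im| ≤ 8/t^3 := by
    have h1 : |((z^3)⁻¹).im| ≤ ‖(z^3)⁻¹‖ := Complex.abs_im_le_norm _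
    rw [norm_inv, norm_pow] at h1
    have h2 : (t/2)^3 ≤ (‖z‖)^3 :=
      pow_le_pow_left₀ (by positivity) habs_ge 3
    have h3 : ((‖z‖)^3)⁻¹ ≤ ((t/2)^3)⁻¹ :=
      inv_anti₀ (by positivity) h2
    have h4 : (((t/2):ℝ)^3)⁻¹ = 8/t^3 := by
      field_simp
      ring
    linarith
  have hJim : |J.im| ≤ π/(360*t^3) := by
    have h1 : |J.im| ≤ ‖J‖ := Complex.abs_im_le_norm J
    have h2 := norm_J_le him2 hre0
    rw [hzim] at h2
    have h3 : (1/720:ℝ)*(π/(4*(t/2)^3)) = π/(360*t^3) := by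
      field_simp
      ring
    rw [← hJdef] at h2
    linarith
  -- log identities
  have hlog1 : Real.log (1/16 + t^2/4)
      = 2*Real.log t - 2*Real.log 2 + Real.log (1+1/(4*t^2)) := by
    have h1 : (1/16 + t^2/4 : ℝ) = (t/2)^2 * (1+1/(4*t^2)) := by field_simp; ring
    rw [h1, Real.log_mul (by positivity) (by positivity), Real.log_pow,
      Real.log_div (ne_of_gt ht0) (by norm_num)]
    push_cast
    ring
  have hlog2 : Real.log (t/(2*π*Real.exp 1))
      = Real.log t - (Real.log 2 + Real.log π + 1) := by
    rw [Real.log_div (ne_of_gt ht0) (by positivity),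
      Real.log_mul (by positivity) (Real.exp_ne_zero 1),
      Real.log_mul (by norm_num) (ne_of_gt Real.pi_pos), Real.log_exp]
  -- imaginary part of the product
  have hhalf : ((1/2:ℂ)) = ((1/2:ℝ):ℂ) := by norm_num
  have hmulim : ((z - 1/2) * Complex.log z).im
      = (z.re - 1/2) * z.arg + z.im * Real.log (‖z‖) := by
    rw [Complex.mul_im, Complex.log_re, Complex.log_im, Complex.sub_re, Complex.sub_im, hhalf]
    simp [Complex.ofReal_re, Complex.ofReal_im]
    try ring
  have hC : ((1/2:ℂ) * ((Real.log (2*π):ℝ):ℂ)).im = 0 := by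
    rw [hhalf, ← Complex.ofReal_mul]
    exact Complex.ofReal_im _
  -- assemble
  have key : -(t/2) * Real.log π +
      ((z - 1/2) * Complex.log z - z + (1/2:ℂ)*((Real.log (2*π):ℝ):ℂ) - (-(Hf z 0) + 6*J)).im
      - (t/2 * Real.log (t/(2*π*Real.exp 1)) - π/8 + 1/(48*t))
      = (t/4 * Real.log (1+1/(4*t^2)) + 1/4 * Real.arctan (1/(2*t))
          - 2*t/(3*(1+4*t^2)) - 1/(48*t))
        - (1/360)*((z^3)⁻¹).im - 6*J.im := by
    rw [Complex.sub_im, Complex.add_im, Complex.sub_im, hmulim, hC, hL, harg, hlogabs,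
      hlog1, hlog2, hzre, hzim]
    linear_combination hinv'
  rw [key]
  -- final numeric bound
  have hD := D_bound t ht
  have habs3 : |(t/4 * Real.log (1+1/(4*t^2)) + 1/4 * Real.arctan (1/(2*t))
      - 2*t/(3*(1+4*t^2)) - 1/(48*t)) - (1/360)*((z^3)⁻¹).im - 6*J.im|
      ≤ 1/(24*t^3) + (1/360)*(8/t^3) + 6*(π/(360*t^3)) := by
    have h1 := abs_add_le ((t/4 * Real.log (1+1/(4*t^2)) + 1/4 * Real.arctan (1/(2*t))
      - 2*t/(3*(1+4*t^2)) - 1/(48*t)) - (1/360)*((z^3)⁻¹).im) (-(6*J.im))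
    have h2 := abs_add_le (t/4 * Real.log (1+1/(4*t^2)) + 1/4 * Real.arctan (1/(2*t))
      - 2*t/(3*(1+4*t^2)) - 1/(48*t)) (-((1/360)*((z^3)⁻¹).im))
    simp only [← sub_eq_add_neg, abs_neg] at h1 h2
    have h3 : |(1/360:ℝ)*((z^3)⁻¹).im| = (1/360)*|((z^3)⁻¹).im| := by
      rw [abs_mul]; norm_num
    have h4 : |(6:ℝ)*J.im| = 6*|J.im| := by
      rw [abs_mul]; norm_num
    rw [h3] at h2
    rw [h4] at h1
    have h5 : (1/360:ℝ)*|((z^3)⁻¹).im| ≤ (1/360)*(8/t^3) := by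
      apply mul_le_mul_of_nonneg_left hz3 (by norm_num)
    have h6 : (6:ℝ)*|J.im| ≤ 6*(π/(360*t^3)) := by
      apply mul_le_mul_of_nonneg_left hJim (by norm_num)
    linarith
  have hcoef : 3*((π:ℝ)^4/90)/(2*π^3) = π/60 := by
    field_simp
    ring
  rw [hcoef]
  have e2 : (6:ℝ)*(π/(360*t^3)) = (π/60) * (1/t^3) := by ring
  have e3 : ((49/640:ℝ) + π/60) * t⁻¹^3 = (49/640)*(1/t^3) + (π/60)*(1/t^3) := by
    rw [inv_pow]; ring
  have e4 : (1/(24*t^3) : ℝ) + (1/360)*(8/t^3) = (1/24 + 1/45)*(1/t^3) := by ring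
  have h7 : ((1/24:ℝ) + 1/45)*(1/t^3) ≤ (49/640)*(1/t^3) := by
    apply mul_le_mul_of_nonneg_right (by norm_num) (by positivity)
  calc |(t/4 * Real.log (1+1/(4*t^2)) + 1/4 * Real.arctan (1/(2*t))
      - 2*t/(3*(1+4*t^2)) - 1/(48*t)) - (1/360)*((z^3)⁻¹).im - 6*J.im|
      ≤ 1/(24*t^3) + (1/360)*(8/t^3) + 6*(π/(360*t^3)) := habs3
    _ ≤ (49/640)*(1/t^3) + (π/60)*(1/t^3) := by
        rw [e2]
        linarith [e4 ▸ h7]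
    _ = (49/640 + π/60) * t⁻¹^3 := e3.symm
end

section
/- For every real t > 1, one has 0 ≤ log(t/2) + 1/(8t²) − log|1/4 + it/2| ≤ 1/(64·t⁴), where |1/4 + it/2| denotes the modulus of the complex number 1/4 + it/2. -/
open Real Complex

lemma aux_log_lb (x : ℝ) (hx : 0 ≤ x) : x - x^2/2 ≤ Real.log (1+x) := by
  set f : ℝ → ℝ := fun y => Real.log (1+y) - y + y^2/2 with hf
  have hder : ∀ y : ℝ, 0 < 1 + y → HasDerivAt f (1/(1+y) - 1 + y) y := by
    intro y hy
    have h1 : HasDerivAt (fun y : ℝ => 1 + y) 1 y := by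
      simpa using (hasDerivAt_id y).const_add 1
    have h2 : HasDerivAt (fun y : ℝ => Real.log (1+y)) (1/(1+y)) y := by
      simpa [one_div, Function.comp_def] using (Real.hasDerivAt_log hy.ne').comp y h1
    have h3 : HasDerivAt (fun y : ℝ => y^2/2) y y := by
      simpa using (hasDerivAt_pow 2 y).div_const 2
    have := (h2.sub (hasDerivAt_id y)).add h3
    exact this
  have hmono : MonotoneOn f (Set.Ici (0:ℝ)) := by
    apply monotoneOn_of_deriv_nonneg (convex_Ici 0)
    · intro y hy
      have hy' : 0 < 1 + y := by
        have : (0:ℝ) ≤ y := hy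
        linarith
      exact (hder y hy').continuousAt.continuousWithinAt
    · intro y hy
      rw [interior_Ici] at hy
      have hy' : 0 < 1 + y := by
        have : (0:ℝ) < y := hy
        linarith
      exact (hder y hy').differentiableAt.differentiableWithinAt
    · intro y hy
      rw [interior_Ici] at hy
      have hy0 : (0:ℝ) < y := hy
      have hy' : 0 < 1 + y := by linarith
      rw [(hder y hy').deriv]
      rw [div_sub' hy'.ne', div_add' _ _ _ hy'.ne']
      apply div_nonneg _ hy'.le
      nlinarith
  have h0 : f 0 ≤ f x := hmono (by simp) (by simpa using hx) hx
  simp only [hf] at h0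
  simp at h0
  linarith

/-- For every real `t > 1`,
`0 ≤ log(t/2) + 1/(8t²) − log|1/4 + it/2| ≤ 1/(64 t⁴)`. -/
theorem stmt_2 (t : ℝ) (ht : 1 < t) :
    0 ≤ Real.log (t/2) + 1/(8*t^2) - Real.log (‖(1/4 + t/2 * Complex.I : ℂ)‖) ∧
    Real.log (t/2) + 1/(8*t^2) - Real.log (‖(1/4 + t/2 * Complex.I : ℂ)‖)
      ≤ 1/(64*t^4) := by
  have ht0 : 0 < t := by linarith
  set x : ℝ := 1/(4*t^2) with hxdef
  have hx0 : 0 < x := by positivity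
  have habs : ‖(1/4 + t/2 * Complex.I : ℂ)‖ = Real.sqrt ((1/4)^2 + (t/2)^2) := by
    have : (1/4 + (t:ℂ)/2 * Complex.I) = ((1/4 : ℝ) : ℂ) + ((t/2 : ℝ):ℂ) * Complex.I := by
      push_cast; ring
    rw [this, Complex.norm_add_mul_I]
  have hs : (1/4:ℝ)^2 + (t/2)^2 = (t/2)^2 * (1 + x) := by
    rw [hxdef]; field_simp; ring
  have hkey : Real.log (‖(1/4 + t/2 * Complex.I : ℂ)‖)
      = Real.log (t/2) + Real.log (1 + x) / 2 := by
    rw [habs, hs, Real.log_sqrt (by positivity), Real.log_mul (by positivity) (by positivity),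
      Real.log_pow]
    push_cast
    ring
  rw [hkey]
  have h1 : Real.log (1+x) ≤ x := by
    have := Real.log_le_sub_one_of_pos (show (0:ℝ) < 1 + x by linarith)
    linarith
  have h2 : x - x^2/2 ≤ Real.log (1+x) := aux_log_lb x hx0.le
  have e1 : 1/(8*t^2) = x/2 := by rw [hxdef]; ring
  have e2 : 1/(64*t^4) = x^2/4 := by rw [hxdef]; field_simp; ring
  rw [e1, e2]
  constructor <;> linarith
end

section
/- For every real t > 1, one has 0 ≤ (−π/2 + 1/(2t)) + arg(1/4 + it/2) ≤ 1/(24·t³), where arg denotes the principal argument of a complex number. -/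
open Real Complex

lemma arctan_le_self_aux {x : ℝ} (hx : 0 ≤ x) : Real.arctan x ≤ x := by
  have mono : MonotoneOn (fun y : ℝ => y - Real.arctan y) (Set.Ici 0) := by
    apply monotoneOn_of_deriv_nonneg (convex_Ici 0)
    · exact (continuous_id.sub Real.continuous_arctan).continuousOn
    · intro y _
      exact (differentiableAt_id.sub (Real.differentiable_arctan y)).differentiableWithinAt
    · intro y hy
      have h : HasDerivAt (fun y : ℝ => y - Real.arctan y) (1 - 1/(1+y^2)) y :=
        (hasDerivAt_id y).sub (Real.hasDerivAt_arctan y)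
      rw [h.deriv]
      have h1 : (1:ℝ) / (1 + y ^ 2) ≤ 1 := by
        rw [div_le_one (by positivity)]; nlinarith
      linarith
  have := mono (Set.self_mem_Ici) (Set.mem_Ici.mpr hx) hx
  simpa [Real.arctan_zero] using this

lemma le_arctan_aux {x : ℝ} (hx : 0 ≤ x) : x - x ^ 3 / 3 ≤ Real.arctan x := by
  have mono : MonotoneOn (fun y : ℝ => Real.arctan y - (y - y ^ 3 / 3)) (Set.Ici 0) := by
    apply monotoneOn_of_deriv_nonneg (convex_Ici 0)
    · exact (Real.continuous_arctan.sub (by continuity)).continuousOn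
    · intro y _
      exact ((Real.differentiable_arctan y).sub (by fun_prop)).differentiableWithinAt
    · intro y hy
      have hd : HasDerivAt (fun y : ℝ => Real.arctan y - (y - y ^ 3 / 3))
          (1 / (1 + y ^ 2) - (1 - 3 * y ^ 2 / 3)) y := by
        have h1 : HasDerivAt (fun y : ℝ => y - y ^ 3 / 3) (1 - 3 * y ^ 2 / 3) y := by
          have := ((hasDerivAt_pow 3 y).div_const 3)
          have h2 : HasDerivAt (fun y : ℝ => y - y ^ 3 / 3) (1 - ((3:ℕ):ℝ) * y ^ (3 - 1) / 3) y :=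
            (hasDerivAt_id' (x := y)).sub this
          convert h2 using 1
          norm_num
        exact (Real.hasDerivAt_arctan y).sub h1
      rw [hd.deriv]
      have hpos : (0:ℝ) < 1 + y ^ 2 := by positivity
      rw [sub_nonneg, le_div_iff₀ hpos]
      nlinarith [sq_nonneg (y^2)]
  have := mono (Set.self_mem_Ici) (Set.mem_Ici.mpr hx) hx
  simp only [Real.arctan_zero] at this
  nlinarith

/-- For every real `t > 1`,
`0 ≤ (−π/2 + 1/(2t)) + arg(1/4 + it/2) ≤ 1/(24 t³)`. -/
theorem stmt_3 (t : ℝ) (ht : 1 < t) :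
    0 ≤ (-(π/2) + 1/(2*t)) + Complex.arg (1/4 + t/2 * Complex.I) ∧
    (-(π/2) + 1/(2*t)) + Complex.arg (1/4 + t/2 * Complex.I) ≤ 1/(24*t^3) := by
  have ht0 : (0:ℝ) < t := lt_trans one_pos ht
  set z : ℂ := 1/4 + t/2 * Complex.I with hz
  have hre : z.re = 1/4 := by simp [hz]
  have him : z.im = t/2 := by simp [hz]
  have harg : z.arg = Real.arctan (2 * t) := by
    have h1 : Real.tan z.arg = 2 * t := by
      rw [Complex.tan_arg, hre, him]; field_simp; ring
    have h2 : z.arg ∈ Set.Ioo (-(π/2)) (π/2) := by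
      constructor
      · exact Complex.neg_pi_div_two_lt_arg_iff.mpr (Or.inl (by rw [hre]; norm_num))
      · exact Complex.arg_lt_pi_div_two_iff.mpr (Or.inl (by rw [hre]; norm_num))
    rw [← h1, Real.arctan_tan h2.1 h2.2]
  have hinv : Real.arctan ((2*t)⁻¹) = π/2 - Real.arctan (2*t) :=
    Real.arctan_inv_of_pos (by positivity)
  have hx : (0:ℝ) ≤ (2*t)⁻¹ := by positivity
  have h1 := arctan_le_self_aux hx
  have h2 := le_arctan_aux hx
  have hrw : (-(π/2) + 1/(2*t)) + z.arg = (2*t)⁻¹ - Real.arctan ((2*t)⁻¹) := by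
    rw [harg, hinv]; field_simp; ring
  rw [hrw]
  constructor
  · linarith
  · have : ((2*t)⁻¹) ^ 3 / 3 = 1/(24*t^3) := by
      field_simp; ring
    linarith
end

section
/- For every real t > 1, with s = 1/2 + it, one has |(1/3)·∫₀^∞ B₃({x})/(x + s/2)³ dx| ≤ (1/60 + 3ζ(4)/(2π³))·t⁻³. -/
open Real Complex MeasureTheory Set Filter Topology

noncomputable def PP3 (x : ℝ) : ℝ := Int.fract x^3 - (3/2)*Int.fract x^2 + (1/2)*Int.fract x
noncomputable def PP4 (x : ℝ) : ℝ := Int.fract x^4 - 2*Int.fract x^3 + Int.fract x^2 - 1/30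
noncomputable def PP5 (x : ℝ) : ℝ :=
  Int.fract x^5 - (5/2)*Int.fract x^4 + (5/3)*Int.fract x^3 - (1/6)*Int.fract x

noncomputable def F3 (a : ℂ) (x : ℝ) : ℂ := ((PP3 x : ℝ) : ℂ) / ((x:ℂ) + a)^3
noncomputable def F5 (a : ℂ) (x : ℝ) : ℂ := ((PP5 x : ℝ) : ℂ) / ((x:ℂ) + a)^5
noncomputable def FF (a : ℂ) (x : ℝ) : ℂ :=
  (1/4 : ℂ) * (((PP4 x : ℝ):ℂ) * (((x:ℂ) + a)^3)⁻¹)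
    + (3/20 : ℂ) * (((PP5 x : ℝ):ℂ) * (((x:ℂ) + a)^4)⁻¹)

lemma fract_eq_sub (y : ℝ) (n : ℤ) (h1 : (n:ℝ) ≤ y) (h2 : y < n + 1) :
    Int.fract y = y - n := by
  rw [Int.fract, Int.floor_eq_iff.mpr ⟨h1, h2⟩]

lemma fract_hasDerivAt {f f' : ℝ → ℝ} (hf : ∀ x, HasDerivAt f (f' x) x)
    (h0 : f 0 = f 1) (hd : f' 0 = f' 1) (x : ℝ) :
    HasDerivAt (fun y => f (Int.fract y)) (f' (Int.fract x)) x := by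
  have key : ∀ c : ℝ, HasDerivAt (fun y : ℝ => f (y - c)) (f' (x - c)) x := by
    intro c
    exact ((hf (x - c)).comp x ((hasDerivAt_id x).sub_const c)).congr_deriv (mul_one _)
  rcases eq_or_ne (Int.fract x) 0 with hx | hx
  · have hfl : (⌊x⌋ : ℝ) = x := by
      have := Int.fract_add_floor x
      rw [hx, zero_add] at this
      exact this
    rw [hx, ← hasDerivWithinAt_univ, ← Iic_union_Ici (a := x)]
    apply HasDerivWithinAt.union
    · have hg : HasDerivAt (fun y : ℝ => f (y - (x - 1))) (f' 1) x := by
        simpa using key (x - 1)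
      rw [hd]
      refine (hg.hasDerivWithinAt).congr_of_eventuallyEq ?_ ?_
      · filter_upwards [mem_nhdsWithin_of_mem_nhds (Ioo_mem_nhds (by linarith) (by linarith)
          : Ioo (x-1) (x+1) ∈ 𝓝 x), self_mem_nhdsWithin] with y hy hy'
        have hyx : y ≤ x := hy'
        rcases eq_or_lt_of_le hyx with rfl | hlt
        · simp only [hx, sub_sub_cancel, h0]
        · have : Int.fract y = y - (↑(⌊x⌋ - 1)) := by
            apply fract_eq_sub
            · push_cast; rw [hfl]; linarith [hy.1]
            · push_cast; rw [hfl]; linarith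
          rw [this]; push_cast; rw [hfl]
      · simp only [hx, sub_sub_cancel, h0]
    · have hg : HasDerivAt (fun y : ℝ => f (y - x)) (f' 0) x := by
        simpa using key x
      refine (hg.hasDerivWithinAt).congr_of_eventuallyEq ?_ ?_
      · filter_upwards [mem_nhdsWithin_of_mem_nhds (Ioo_mem_nhds (by linarith) (by linarith)
          : Ioo (x-1) (x+1) ∈ 𝓝 x), self_mem_nhdsWithin] with y hy hy'
        have : Int.fract y = y - (⌊x⌋ : ℝ) := by
          apply fract_eq_sub
          · rw [hfl]; exact hy'
          · rw [hfl]; exact hy.2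
        rw [this, hfl]
      · simp [hx]
  · have h1 : (⌊x⌋ : ℝ) < x := by
      rcases eq_or_lt_of_le (Int.floor_le x) with h | h
      · exact absurd (by rw [Int.fract, h, sub_self]) hx
      · exact h
    have h2 : x < ⌊x⌋ + 1 := Int.lt_floor_add_one x
    have hg : HasDerivAt (fun y : ℝ => f (y - (⌊x⌋:ℝ))) (f' (Int.fract x)) x := by
      have := key (⌊x⌋ : ℝ)
      rwa [show x - (⌊x⌋:ℝ) = Int.fract x from rfl] at this
    refine hg.congr_of_eventuallyEq ?_
    filter_upwards [Ioo_mem_nhds h1 h2] with y hy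
    rw [fract_eq_sub y ⌊x⌋ hy.1.le hy.2]

lemma b5_bound (r : ℝ) (h0 : 0 ≤ r) (h1 : r ≤ 1) :
    |r^5 - (5/2)*r^4 + (5/3)*r^3 - (1/6)*r| ≤ 1/36 := by
  set u : ℝ := r - r^2 with hu
  have hu0 : 0 ≤ u := by nlinarith
  have hu4 : u ≤ 1/4 := by nlinarith [sq_nonneg (r - 1/2)]
  have hfac : r^5 - (5/2)*r^4 + (5/3)*r^3 - (1/6)*r = (r - 1/2) * u * (u + 1/3) := by
    rw [hu]; ring
  have hsq : ((r - 1/2) * u * (u + 1/3))^2 ≤ (1/36)^2 := by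
    have h : ((r-1/2)*u*(u+1/3))^2 = (1/4 - u) * u^2 * (u + 1/3)^2 := by rw [hu]; ring
    rw [h]
    nlinarith [sq_nonneg (u - 1/5), sq_nonneg (u - 1/4), sq_nonneg u, mul_nonneg hu0 hu0,
      sq_nonneg (u*(u-1/5)), sq_nonneg (u^2 - u/5), mul_nonneg (mul_nonneg hu0 hu0) hu0]
  rw [hfac]
  set B : ℝ := (r - 1/2) * u * (u + 1/3)
  nlinarith [_root_.sq_abs B, abs_nonneg B]

lemma PP3_bound (x : ℝ) : |PP3 x| ≤ 3 := by
  have h0 := Int.fract_nonneg x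
  have h1 := (Int.fract_lt_one x).le
  have e2 : Int.fract x^2 ≤ 1 := by nlinarith
  have e3 : Int.fract x^3 ≤ 1 := by nlinarith
  have p2 : 0 ≤ Int.fract x^2 := by positivity
  have p3 : 0 ≤ Int.fract x^3 := by positivity
  rw [PP3, abs_le]; constructor <;> nlinarith

lemma PP4_bound (x : ℝ) : |PP4 x| ≤ 5 := by
  have h0 := Int.fract_nonneg x
  have h1 := (Int.fract_lt_one x).le
  have e2 : Int.fract x^2 ≤ 1 := by nlinarith
  have e3 : Int.fract x^3 ≤ 1 := by nlinarith
  have e4 : Int.fract x^4 ≤ 1 := by nlinarith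
  have p2 : 0 ≤ Int.fract x^2 := by positivity
  have p3 : 0 ≤ Int.fract x^3 := by positivity
  have p4 : 0 ≤ Int.fract x^4 := by positivity
  rw [PP4, abs_le]; constructor <;> nlinarith

lemma PP5_bound (x : ℝ) : |PP5 x| ≤ 1/36 :=
  b5_bound _ (Int.fract_nonneg x) (Int.fract_lt_one x).le

lemma PP4_deriv (x : ℝ) : HasDerivAt PP4 (4 * PP3 x) x := by
  exact fract_hasDerivAt (f := fun r => r^4 - 2*r^3 + r^2 - 1/30)
    (f' := fun r => 4 * (r^3 - (3/2)*r^2 + (1/2)*r))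
    (fun r => by
      refine ((((hasDerivAt_pow 4 r).sub ((hasDerivAt_pow 3 r).const_mul 2)).add
        (hasDerivAt_pow 2 r)).sub_const (1/30)).congr_deriv ?_
      push_cast; ring)
    (by norm_num) (by norm_num) x

lemma PP5_deriv (x : ℝ) : HasDerivAt PP5 (5 * PP4 x) x := by
  exact fract_hasDerivAt (f := fun r => r^5 - (5/2)*r^4 + (5/3)*r^3 - (1/6)*r)
    (f' := fun r => 5 * (r^4 - 2*r^3 + r^2 - 1/30))
    (fun r => by
      refine (((((hasDerivAt_pow 5 r).sub ((hasDerivAt_pow 4 r).const_mul (5/2))).add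
        ((hasDerivAt_pow 3 r).const_mul (5/3))).sub ((hasDerivAt_id r).const_mul (1/6)))).congr_deriv
        ?_
      push_cast; ring)
    (by norm_num) (by norm_num) x

lemma PP3_meas : Measurable PP3 := by
  have h : Continuous (fun r : ℝ => r^3 - (3/2)*r^2 + (1/2)*r) := by continuity
  exact h.measurable.comp measurable_fract

lemma PP5_meas : Measurable PP5 := by
  have h : Continuous (fun r : ℝ => r^5 - (5/2)*r^4 + (5/3)*r^3 - (1/6)*r) := by continuity
  exact h.measurable.comp measurable_fract

section
variable {a : ℂ}

lemma ane (him : a.im ≠ 0) (x : ℝ) : ((x:ℂ) + a) ≠ 0 := by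
  intro h
  have : ((x:ℂ) + a).im = a.im := by simp
  rw [h] at this
  exact him (by simpa using this.symm)

lemma habs2 (hre : a.re = 1/4) (x : ℝ) (hx : 0 ≤ x) :
    x^2 + (1/16 + a.im^2) ≤ (‖(x:ℂ) + a‖)^2 := by
  rw [Complex.sq_norm, Complex.normSq_apply]
  simp only [Complex.add_re, Complex.add_im, Complex.ofReal_re, Complex.ofReal_im, hre, zero_add]
  nlinarith

lemma FF_deriv (him : a.im ≠ 0) (x : ℝ) :
    HasDerivAt (FF a) (F3 a x - (3/5) * F5 a x) x := by
  have hza : HasDerivAt (fun z : ℂ => z + a) 1 ((x:ℂ)) := (hasDerivAt_id _).add_const a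
  have h3c : HasDerivAt (fun z : ℂ => ((z + a)^3)⁻¹)
      (-(3 * ((x:ℂ) + a)^2 * 1) / (((x:ℂ) + a)^3)^2) (x:ℂ) :=
    (hza.pow 3).inv (pow_ne_zero _ (ane him x))
  have h4c : HasDerivAt (fun z : ℂ => ((z + a)^4)⁻¹)
      (-(4 * ((x:ℂ) + a)^3 * 1) / (((x:ℂ) + a)^4)^2) (x:ℂ) :=
    (hza.pow 4).inv (pow_ne_zero _ (ane him x))
  have h3R := h3c.comp_ofReal
  have h4R := h4c.comp_ofReal
  have n4 := (PP4_deriv x).ofReal_comp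
  have n5 := (PP5_deriv x).ofReal_comp
  have m1 := (n4.mul h3R).const_mul (1/4 : ℂ)
  have m2 := (n5.mul h4R).const_mul (3/20 : ℂ)
  have hsum := m1.add m2
  have : FF a = fun y : ℝ => (1/4 : ℂ) * (((PP4 y : ℝ):ℂ) * (((y:ℂ) + a)^3)⁻¹)
      + (3/20 : ℂ) * (((PP5 y : ℝ):ℂ) * (((y:ℂ) + a)^4)⁻¹) := rfl
  rw [this]
  refine hsum.congr_deriv ?_
  symm
  rw [F3, F5]
  push_cast
  field_simp [ane him x]
  ring

lemma FF_tendsto (hre : a.re = 1/4) : Tendsto (FF a) atTop (𝓝 0) := by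
  have habs_ge : ∀ x : ℝ, 0 ≤ x → x ≤ ‖(x:ℂ) + a‖ := by
    intro x hx
    have h := Complex.abs_re_le_norm ((x:ℂ) + a)
    have hr : ((x:ℂ) + a).re = x + 1/4 := by simp [hre]
    rw [hr] at h
    calc x ≤ |x + 1/4| := (le_add_of_nonneg_right (by norm_num)).trans (le_abs_self _)
    _ ≤ _ := h
  have hg : Tendsto (fun x : ℝ => 3 / x^3) atTop (𝓝 0) := by
    have h : Tendsto (fun x : ℝ => x^3) atTop atTop := tendsto_pow_atTop (by norm_num)
    simpa [div_eq_mul_inv] using h.inv_tendsto_atTop.const_mul (3:ℝ)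
  refine squeeze_zero_norm' ?_ hg
  · filter_upwards [eventually_ge_atTop (1:ℝ)] with x hx1
    have hx0 : (0:ℝ) ≤ x := by linarith
    have hxa := habs_ge x hx0
    have hx3 : x^3 ≤ ‖(x:ℂ) + a‖^3 := pow_le_pow_left₀ hx0 hxa 3
    have hx4 : x^4 ≤ ‖(x:ℂ) + a‖^4 := pow_le_pow_left₀ hx0 hxa 4
    have hx3p : (0:ℝ) < x^3 := by positivity
    have hx4p : (0:ℝ) < x^4 := by positivity
    have k1 : ‖(1/4 : ℂ) * (((PP4 x : ℝ):ℂ) * (((x:ℂ) + a)^3)⁻¹)‖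
        = (1/4) * (|PP4 x| * (‖(x:ℂ) + a‖^3)⁻¹) := by
      simp [norm_mul, norm_inv, norm_pow, Complex.norm_real, Real.norm_eq_abs]
    have k2 : ‖(3/20 : ℂ) * (((PP5 x : ℝ):ℂ) * (((x:ℂ) + a)^4)⁻¹)‖
        = (3/20) * (|PP5 x| * (‖(x:ℂ) + a‖^4)⁻¹) := by
      simp [norm_mul, norm_inv, norm_pow, Complex.norm_real, Real.norm_eq_abs]
    have hn : ‖FF a x‖ ≤ (1/4) * (|PP4 x| * (‖(x:ℂ) + a‖^3)⁻¹)
        + (3/20) * (|PP5 x| * (‖(x:ℂ) + a‖^4)⁻¹) := by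
      rw [← k1, ← k2]
      exact norm_add_le _ _
    refine hn.trans ?_
    have hb4 := PP4_bound x
    have hb5 := PP5_bound x
    have hi3 : (‖(x:ℂ) + a‖^3)⁻¹ ≤ (x^3)⁻¹ := by
      apply inv_anti₀ hx3p hx3
    have hi4 : (‖(x:ℂ) + a‖^4)⁻¹ ≤ (x^4)⁻¹ := by
      apply inv_anti₀ hx4p hx4
    have hx43 : (x^4)⁻¹ ≤ (x^3)⁻¹ := by
      apply inv_anti₀ hx3p
      nlinarith
    have h1 : (1/4:ℝ) * (|PP4 x| * (‖(x:ℂ) + a‖^3)⁻¹) ≤ (5/4) * (x^3)⁻¹ := by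
      have := abs_nonneg (PP4 x)
      have h3i : (0:ℝ) ≤ (‖(x:ℂ) + a‖^3)⁻¹ := by positivity
      nlinarith
    have h2 : (3/20:ℝ) * (|PP5 x| * (‖(x:ℂ) + a‖^4)⁻¹) ≤ (3/20) * (x^3)⁻¹ := by
      have := abs_nonneg (PP5 x)
      have h4i : (0:ℝ) ≤ (‖(x:ℂ) + a‖^4)⁻¹ := by positivity
      have : |PP5 x| * (‖(x:ℂ) + a‖^4)⁻¹ ≤ 1 * (x^3)⁻¹ := by
        apply mul_le_mul (hb5.trans (by norm_num)) (hi4.trans hx43) (by positivity) (by norm_num)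
      nlinarith [inv_nonneg.mpr hx3p.le]
    have hfin : (5/4)*(x^3)⁻¹ + (3/20)*(x^3)⁻¹ ≤ 3/x^3 := by
      rw [div_eq_mul_inv 3 (x^3)]
      have := inv_nonneg.mpr hx3p.le
      linarith
    linarith

end


lemma qA_deriv (c : ℝ) (hc : 0 < c) (x : ℝ) :
    HasDerivAt (fun y : ℝ => (y*(2*y^2+3*c)) / (3*c^2*((y^2+c)*Real.sqrt (y^2+c))))
      (((x^2+c)^2 * Real.sqrt (x^2+c))⁻¹) x := by
  have hrpos : 0 < x^2 + c := by positivity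
  have hspos : 0 < Real.sqrt (x^2+c) := Real.sqrt_pos.mpr hrpos
  have hs2 : Real.sqrt (x^2+c) ^ 2 = x^2 + c := Real.sq_sqrt hrpos.le
  have hr : HasDerivAt (fun y : ℝ => y^2 + c) (2*x) x := by
    simpa using (hasDerivAt_pow 2 x).add_const c
  have hs : HasDerivAt (fun y : ℝ => Real.sqrt (y^2+c)) (2*x/(2*Real.sqrt (x^2+c))) x :=
    hr.sqrt (ne_of_gt hrpos)
  have hN : HasDerivAt (fun y : ℝ => y*(2*y^2+3*c)) (1*(2*x^2+3*c) + x*(2*(2*x))) x := by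
    have := (hasDerivAt_id x).mul (((hasDerivAt_pow 2 x).const_mul 2).add_const (3*c))
    refine this.congr_deriv ?_
    norm_num
  have hD : HasDerivAt (fun y : ℝ => 3*c^2*((y^2+c)*Real.sqrt (y^2+c)))
      (3*c^2*(2*x*Real.sqrt (x^2+c) + (x^2+c)*(2*x/(2*Real.sqrt (x^2+c))))) x :=
    (hr.mul hs).const_mul (3*c^2)
  have hDne : 3*c^2*((x^2+c)*Real.sqrt (x^2+c)) ≠ 0 := by positivity
  have hdiv := hN.div hD hDne
  refine hdiv.congr_deriv ?_
  symm
  set s := Real.sqrt (x^2+c) with hsdef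
  field_simp
  linear_combination (-(x^2*(2*x^2+3*c))) * hs2

lemma qA_tendsto (c : ℝ) (hc : 0 < c) :
    Tendsto (fun y : ℝ => (y*(2*y^2+3*c)) / (3*c^2*((y^2+c)*Real.sqrt (y^2+c))))
      atTop (𝓝 (2/(3*c^2))) := by
  have h0 : Tendsto (fun y : ℝ => c / y^2) atTop (𝓝 0) := by
    apply Tendsto.div_atTop tendsto_const_nhds
    exact tendsto_pow_atTop two_ne_zero
  have hnum : Tendsto (fun y : ℝ => 2 + 3 * (c / y^2)) atTop (𝓝 (2 + 3 * 0)) :=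
    tendsto_const_nhds.add (h0.const_mul 3)
  have hsq : Tendsto (fun y : ℝ => Real.sqrt (1 + c / y^2)) atTop (𝓝 (Real.sqrt (1 + 0))) :=
    (Real.continuous_sqrt.tendsto _).comp (tendsto_const_nhds.add h0)
  have hden : Tendsto (fun y : ℝ => 3*c^2 * ((1 + c/y^2) * Real.sqrt (1 + c/y^2)))
      atTop (𝓝 (3*c^2 * ((1 + 0) * Real.sqrt (1 + 0)))) :=
    ((tendsto_const_nhds.add h0).mul hsq).const_mul _
  have hden_ne : 3*c^2 * ((1 + (0:ℝ)) * Real.sqrt (1 + 0)) ≠ 0 := by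
    simp; positivity
  have := hnum.div hden hden_ne
  have hval : (2 + 3*(0:ℝ)) / (3*c^2 * ((1+0) * Real.sqrt (1+0))) = 2/(3*c^2) := by
    simp
  rw [hval] at this
  apply this.congr'
  filter_upwards [eventually_gt_atTop (0:ℝ)] with y hy
  have hy2 : (0:ℝ) < y^2 := by positivity
  have hsqrt : Real.sqrt (y^2+c) = y * Real.sqrt (1 + c/y^2) := by
    rw [← Real.sqrt_sq hy.le, ← Real.sqrt_mul (by positivity)]
    congr 1
    field_simp
    exact Real.sq_sqrt hy2.le
  simp only [Pi.div_apply]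
  rw [hsqrt]
  field_simp

lemma q_integral (c : ℝ) (hc : 0 < c) :
    IntegrableOn (fun x : ℝ => ((x^2+c)^2 * Real.sqrt (x^2+c))⁻¹) (Ioi 0) ∧
    (∫ x in Ioi (0:ℝ), ((x^2+c)^2 * Real.sqrt (x^2+c))⁻¹) = 2/(3*c^2) := by
  have hderiv : ∀ x ∈ Ici (0:ℝ), HasDerivAt
      (fun y : ℝ => (y*(2*y^2+3*c)) / (3*c^2*((y^2+c)*Real.sqrt (y^2+c))))
      (((x^2+c)^2 * Real.sqrt (x^2+c))⁻¹) x := fun x _ => qA_deriv c hc x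
  have hpos : ∀ x ∈ Ioi (0:ℝ), 0 ≤ ((x^2+c)^2 * Real.sqrt (x^2+c))⁻¹ := by
    intro x _; positivity
  have htend := qA_tendsto c hc
  have hint : IntegrableOn (fun x : ℝ => ((x^2+c)^2 * Real.sqrt (x^2+c))⁻¹) (Ioi 0) := by
    apply integrableOn_Ioi_deriv_of_nonneg ((hderiv 0 self_mem_Ici).continuousAt.continuousWithinAt)
      (fun x hx => hderiv x (mem_Ici.2 (le_of_lt hx))) hpos htend
  refine ⟨hint, ?_⟩
  rw [MeasureTheory.integral_Ioi_of_hasDerivAt_of_tendsto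
    ((hderiv 0 self_mem_Ici).continuousAt.continuousWithinAt)
    (fun x hx => hderiv x (mem_Ici.2 (le_of_lt hx))) hint htend]
  norm_num

section
variable {a : ℂ}

lemma cube_lb (hre : a.re = 1/4) (him : 1/2 ≤ a.im) (x : ℝ) (hx : 0 ≤ x) :
    (1+x^2)/8 ≤ (‖(x:ℂ) + a‖)^3 ∧ (1+x^2)/32 ≤ (‖(x:ℂ) + a‖)^5 := by
  set A := ‖(x:ℂ) + a‖ with hA
  have hA0 : 0 ≤ A := norm_nonneg _
  have h2 := habs2 hre x hx
  have him2 : 1/4 ≤ a.im^2 := by nlinarith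
  have hq : (1/4)*(1+x^2) ≤ A^2 := by nlinarith
  have hhalf : 1/2 ≤ A := by nlinarith
  constructor
  · nlinarith [mul_le_mul hq hhalf (by norm_num) (sq_nonneg A), sq_nonneg x]
  · have h4 : ((1/4)*(1+x^2))^2 ≤ (A^2)^2 := by nlinarith
    have hx2 : (0:ℝ) < 1 + x^2 := by positivity
    have h15 : (1+x^2)^2 ≥ 1 + x^2 := by nlinarith
    nlinarith [mul_le_mul h4 hhalf (by norm_num) (by positivity : (0:ℝ) ≤ (A^2)^2)]

lemma F3_integrable (hre : a.re = 1/4) (him : 1/2 ≤ a.im) : IntegrableOn (F3 a) (Ioi 0) := by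
  refine Integrable.mono' ((integrable_inv_one_add_sq.const_mul 24).restrict (s := Ioi 0)) ?_ ?_
  · apply Measurable.aestronglyMeasurable
    exact (Complex.measurable_ofReal.comp PP3_meas).div
      ((Complex.continuous_ofReal.add continuous_const).pow 3).measurable
  · refine (ae_restrict_iff' measurableSet_Ioi).2 (ae_of_all _ fun x hx => ?_)
    have hx0 : (0:ℝ) ≤ x := le_of_lt hx
    obtain ⟨hc, -⟩ := cube_lb hre him x hx0
    have hx2 : (0:ℝ) < 1 + x^2 := by positivity
    have hnorm : ‖F3 a x‖ = |PP3 x| / (‖(x:ℂ) + a‖)^3 := by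
      rw [F3]
      simp [norm_div, norm_pow, Complex.norm_real, Real.norm_eq_abs]
    rw [hnorm]
    calc |PP3 x| / (‖(x:ℂ) + a‖)^3 ≤ 3 / ((1+x^2)/8) :=
          div_le_div₀ (by norm_num) (PP3_bound x) (by positivity) hc
    _ = 24 * (1+x^2)⁻¹ := by field_simp; norm_num

lemma F5_integrable (hre : a.re = 1/4) (him : 1/2 ≤ a.im) : IntegrableOn (F5 a) (Ioi 0) := by
  refine Integrable.mono' ((integrable_inv_one_add_sq.const_mul 1).restrict (s := Ioi 0)) ?_ ?_
  · apply Measurable.aestronglyMeasurable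
    exact (Complex.measurable_ofReal.comp PP5_meas).div
      ((Complex.continuous_ofReal.add continuous_const).pow 5).measurable
  · refine (ae_restrict_iff' measurableSet_Ioi).2 (ae_of_all _ fun x hx => ?_)
    have hx0 : (0:ℝ) ≤ x := le_of_lt hx
    obtain ⟨-, hc⟩ := cube_lb hre him x hx0
    have hx2 : (0:ℝ) < 1 + x^2 := by positivity
    have hnorm : ‖F5 a x‖ = |PP5 x| / (‖(x:ℂ) + a‖)^5 := by
      rw [F5]
      simp [norm_div, norm_pow, Complex.norm_real, Real.norm_eq_abs]
    rw [hnorm]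
    calc |PP5 x| / (‖(x:ℂ) + a‖)^5 ≤ (1/36) / ((1+x^2)/32) :=
          div_le_div₀ (by norm_num) (PP5_bound x) (by positivity) hc
    _ ≤ 1 * (1+x^2)⁻¹ := by
        rw [div_div_eq_mul_div, one_mul, div_le_iff₀ hx2]
        rw [inv_mul_cancel₀ (ne_of_gt hx2)]
        norm_num

end

section
variable {a : ℂ}

lemma F3_identity (hre : a.re = 1/4) (him : 1/2 ≤ a.im) :
    ∫ x in Ioi (0:ℝ), F3 a x = 1/(120*a^3) + (3/5 : ℂ) * ∫ x in Ioi (0:ℝ), F5 a x := by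
  have him0 : a.im ≠ 0 := by intro h; rw [h] at him; norm_num at him
  have hi3 := F3_integrable hre him
  have hi5 := F5_integrable hre him
  have hi5' : IntegrableOn (fun x => (3/5 : ℂ) * F5 a x) (Ioi 0) := hi5.const_mul _
  have hsub : IntegrableOn (fun x => F3 a x - (3/5 : ℂ) * F5 a x) (Ioi 0) := hi3.sub hi5'
  have hFTC := integral_Ioi_of_hasDerivAt_of_tendsto'
      (f := FF a) (f' := fun x => F3 a x - (3/5) * F5 a x) (a := 0)
      (fun x _ => FF_deriv him0 x) hsub (FF_tendsto hre)
  have ha0 : a ≠ 0 := fun h => him0 (by simp [h])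
  have hFF0 : FF a 0 = -(1/(120*a^3)) := by
    rw [FF]
    norm_num [PP4, PP5, Int.fract_zero]
    field_simp
    ring
  have h1 : ∫ x in Ioi (0:ℝ), (F3 a x - (3/5 : ℂ) * F5 a x) = 1/(120*a^3) := by
    rw [hFTC, hFF0]; ring
  have h2 : ∫ x in Ioi (0:ℝ), (F3 a x - (3/5 : ℂ) * F5 a x)
      = (∫ x in Ioi (0:ℝ), F3 a x) - (3/5 : ℂ) * ∫ x in Ioi (0:ℝ), F5 a x := by
    rw [integral_sub hi3 hi5', integral_const_mul]
  rw [h2] at h1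
  linear_combination h1

lemma J_bound (hre : a.re = 1/4) (him : 1/2 ≤ a.im) :
    ‖∫ x in Ioi (0:ℝ), F5 a x‖ ≤ (1/36) * (2/(3*(1/16 + a.im^2)^2)) := by
  set c : ℝ := 1/16 + a.im^2 with hc
  have hcpos : 0 < c := by positivity
  have hi5 := F5_integrable hre him
  obtain ⟨hqint, hqval⟩ := q_integral c hcpos
  refine (norm_integral_le_integral_norm _).trans ?_
  have hmono : ∫ x in Ioi (0:ℝ), ‖F5 a x‖
      ≤ ∫ x in Ioi (0:ℝ), (1/36) * ((x^2+c)^2 * Real.sqrt (x^2+c))⁻¹ := by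
    apply setIntegral_mono_on hi5.norm (hqint.const_mul _) measurableSet_Ioi
    intro x hx
    have hx0 : (0:ℝ) ≤ x := le_of_lt hx
    have h2 := habs2 hre x hx0
    set A := ‖(x:ℂ) + a‖ with hA
    have hA0 : 0 ≤ A := norm_nonneg _
    have hrpos : (0:ℝ) < x^2 + c := by positivity
    have hs : Real.sqrt (x^2+c) ≤ A := by
      rw [show A = Real.sqrt (A^2) from (Real.sqrt_sq hA0).symm]
      exact Real.sqrt_le_sqrt h2
    have h4 : (x^2+c)^2 ≤ (A^2)^2 := pow_le_pow_left₀ hrpos.le h2 2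
    have h5 : (x^2+c)^2 * Real.sqrt (x^2+c) ≤ A^5 := by
      have hsp : 0 ≤ Real.sqrt (x^2+c) := Real.sqrt_nonneg _
      calc (x^2+c)^2 * Real.sqrt (x^2+c) ≤ (A^2)^2 * A :=
        mul_le_mul h4 hs hsp (by positivity)
      _ = A^5 := by ring
    have hnorm : ‖F5 a x‖ = |PP5 x| / A^5 := by
      rw [F5]
      simp [norm_div, norm_pow, Complex.norm_real, Real.norm_eq_abs, hA]
    rw [hnorm]
    calc |PP5 x| / A^5 ≤ (1/36) / ((x^2+c)^2 * Real.sqrt (x^2+c)) :=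
      div_le_div₀ (by norm_num) (PP5_bound x) (by positivity) h5
    _ = (1/36) * ((x^2+c)^2 * Real.sqrt (x^2+c))⁻¹ := by rw [div_eq_mul_inv]
  refine hmono.trans ?_
  rw [integral_const_mul, hqval]

end

set_option maxHeartbeats 1000000 in
/-- For every real `t > 1`, with `s = 1/2 + it`,
`|(1/3)·∫₀^∞ B₃({x})/(x + s/2)³ dx| ≤ (1/60 + 3ζ(4)/(2π³))·t⁻³`,
where `B₃(x) = x³ − (3/2)x² + (1/2)x` and `ζ(4) = π⁴/90`. -/
theorem stmt_7 (t : ℝ) (ht : 1 < t) :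
    ‖(1/3) * ∫ x in Set.Ioi (0:ℝ),
        (((Int.fract x)^3 - (3/2)*(Int.fract x)^2 + (1/2)*(Int.fract x) : ℝ) : ℂ)
          / ((x:ℂ) + (1/2 + t * Complex.I)/2)^3‖
      ≤ (1/60 + 3*(π^4/90)/(2*π^3)) * t⁻¹^3 := by
  have ht0 : 0 < t := by linarith
  set a : ℂ := (1/2 + (t:ℂ) * Complex.I)/2 with ha
  have hre : a.re = 1/4 := by simp [ha]; norm_num
  have haim : a.im = t/2 := by simp [ha]
  have him : 1/2 ≤ a.im := by rw [haim]; linarith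
  have hgoal : (∫ x in Set.Ioi (0:ℝ),
      (((Int.fract x)^3 - (3/2)*(Int.fract x)^2 + (1/2)*(Int.fract x) : ℝ) : ℂ)
        / ((x:ℂ) + a)^3) = ∫ x in Set.Ioi (0:ℝ), F3 a x := rfl
  rw [hgoal, F3_identity hre him]
  set J : ℂ := ∫ x in Ioi (0:ℝ), F5 a x with hJ
  -- bound each piece
  have habsa : t/2 ≤ ‖a‖ := by
    calc t/2 = a.im := haim.symm
    _ ≤ |a.im| := le_abs_self _
    _ ≤ ‖a‖ := Complex.abs_im_le_norm a
  have habsa3 : t^3/8 ≤ (‖a‖)^3 := by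
    calc t^3/8 = (t/2)^3 := by ring
    _ ≤ (‖a‖)^3 := pow_le_pow_left₀ (by linarith) habsa 3
  have ht3 : (0:ℝ) < t^3 := by positivity
  have hApos : (0:ℝ) < ‖a‖ := lt_of_lt_of_le (by linarith) habsa
  have h1 : ‖1/(120*a^3)‖ ≤ (1/15) * (t^3)⁻¹ := by
    have he : ‖1/(120*a^3)‖ = 1/(120*(‖a‖)^3) := by
      simp [norm_div, norm_mul, norm_pow]
    rw [he]
    have he2 : (1/15 : ℝ) * (t^3)⁻¹ = 1/(15*t^3) := by
      field_simp
    rw [he2]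
    apply one_div_le_one_div_of_le (by positivity)
    nlinarith
  -- bound on J
  have hc : (1/16 + a.im^2) = (1+4*t^2)/16 := by rw [haim]; ring
  have hcsq : 25*t^3 ≤ 256*((1/16 + a.im^2))^2 := by
    rw [hc]
    have e1 : t^2 ≤ t^3 := by nlinarith
    have e2 : t ≤ t^2 := by nlinarith
    nlinarith [mul_nonneg (sub_nonneg.2 ht.le)
      (show (0:ℝ) ≤ 16*t^3 - 9*t^2 - t - 1 by linarith)]
  have hcpos : (0:ℝ) < 1/16 + a.im^2 := by positivity
  have h2 : ‖J‖ ≤ (256/1350) * (t^3)⁻¹ := by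
    refine (J_bound hre him).trans ?_
    have he : (1/36 : ℝ) * (2/(3*(1/16 + a.im^2)^2)) = 1/(54*(1/16 + a.im^2)^2) := by
      field_simp; ring
    have he2 : (256/1350 : ℝ) * (t^3)⁻¹ = 256/(1350*t^3) := by
      field_simp
    rw [he, he2, div_le_div_iff₀ (by positivity) (by positivity)]
    nlinarith
  -- assemble
  have h35 : ‖(3/5 : ℂ)‖ = 3/5 := by
    rw [show ((3/5:ℂ)) = ((3/5:ℝ):ℂ) by norm_num, Complex.norm_real, Real.norm_eq_abs]
    norm_num
  have hJabs : ‖(3/5 : ℂ) * J‖ = (3/5) * ‖J‖ := by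
    rw [norm_mul, h35]
  calc ‖(1/3) * (1/(120*a^3) + (3/5 : ℂ) * J)‖
      = (1/3) * ‖1/(120*a^3) + (3/5 : ℂ) * J‖ := by
        rw [norm_mul]; norm_num
    _ ≤ (1/3) * (‖1/(120*a^3)‖ + ‖(3/5 : ℂ) * J‖) := by
        have := norm_add_le (1/(120*a^3)) ((3/5 : ℂ) * J)
        linarith
    _ = (1/3) * (‖1/(120*a^3)‖ + (3/5) * ‖J‖) := by rw [hJabs]
    _ ≤ (1/3) * ((1/15) * (t^3)⁻¹ + (3/5) * ((256/1350) * (t^3)⁻¹)) := by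
        have h5 : (0:ℝ) ≤ 3/5 := by norm_num
        nlinarith [mul_le_mul_of_nonneg_left h2 h5]
    _ ≤ (1/60 + π/60) * (t^3)⁻¹ := by
        have hπ : (406:ℝ)/6750 ≤ 1/60 + π/60 := by
          nlinarith [Real.pi_gt_d6]
        have hinv : (0:ℝ) ≤ (t^3)⁻¹ := by positivity
        nlinarith [mul_le_mul_of_nonneg_right hπ hinv]
    _ = (1/60 + 3*(π^4/90)/(2*π^3)) * t⁻¹^3 := by
        rw [inv_pow]
        congr 1
        have hπ0 := Real.pi_ne_zero
        field_simp
        ring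
end
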